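/- For every n ≥ 1, the number of marked 3-partitions of n of length m equals the number of marked 2-partitions of n of length m, for every m. -/

import Mathlib

/-- A `lam`-partition: a strictly increasing list of positive integers whose
consecutive differences are at least `lam`. -/
def IsLamPartition (lam : ℕ) (l : List ℕ) : Prop :=
  l.Chain' (fun a b => a + lam ≤ b) ∧ ∀ i ∈ l, 0 < i

/-- A partition into distinct parts: a strictly increasing list of positive integers. -/
def IsDistinctPartition (l : List ℕ) : Prop :=
  l.Chain' (· < ·) ∧ ∀ i ∈ l, 0 < i

/-- Auxiliary: given the previous part `p`, collect the parts starting a new maximal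
dense block (i.e. those preceded by a gap `> lam`). -/
def blockStartsAux (lam : ℕ) : ℕ → List ℕ → List ℕ
  | _, [] => []
  | p, a :: t => (if p + lam < a then [a] else []) ++ blockStartsAux lam a t

/-- The smallest parts of the maximal dense blocks of a `lam`-partition. -/
def blockStarts (lam : ℕ) : List ℕ → List ℕ
  | [] => []
  | a :: t => a :: blockStartsAux lam a t

/-- The leading parts of a `lam`-partition (for `lam ∈ {2,3}`): smallest parts of the
maximal dense blocks of index 1 (for `lam = 3`: smallest part `> 2`; for `lam = 2`:
smallest part odd and `> 1`). -/
def leadingParts (lam : ℕ) (l : List ℕ) : List ℕ :=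
  if lam = 2 then (blockStarts 2 l).filter (fun a => decide (1 < a ∧ a % 2 = 1))
  else (blockStarts lam l).filter (fun a => decide (2 < a))

/-- The index of a `lam`-partition: the number of maximal dense blocks of index 1. -/
def lamIndex (lam : ℕ) (l : List ℕ) : ℕ := (leadingParts lam l).length

/-- A marked `lam`-partition: a `lam`-partition together with a set of marked parts,
which must be a subset of its leading parts. -/
def IsMarked (lam : ℕ) (p : List ℕ × Finset ℕ) : Prop :=
  IsLamPartition lam p.1 ∧ ∀ a ∈ p.2, a ∈ leadingParts lam p.1

namespace S17

/-- Goodness: parts that may carry a mark. -/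
def good (lam a : ℕ) : Prop := if lam = 2 then 1 < a ∧ a % 2 = 1 else 2 < a

/-- Validity of a plain list given previous part `p` (`p = 0`: no previous part). -/
def POk (lam : ℕ) : ℕ → List ℕ → Prop
  | _, [] => True
  | p, a :: t => (if p = 0 then 0 < a else p + lam ≤ a) ∧ POk lam a t

/-- Validity of a marked list given previous part `p` (`p = 0`: no previous part). -/
def Ok (lam : ℕ) : ℕ → List (ℕ × Bool) → Prop
  | _, [] => True
  | p, x :: t => (if p = 0 then 0 < x.1 else p + lam ≤ x.1) ∧
      (x.2 = true → good lam x.1 ∧ (p = 0 ∨ p + lam < x.1)) ∧ Ok lam x.1 t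

def nmarks (w : List (ℕ × Bool)) : ℕ := w.countP (fun x => x.2)
def wsum (w : List (ℕ × Bool)) : ℕ := (w.map Prod.fst).sum
def wlen (w : List (ℕ × Bool)) : ℕ := w.length + nmarks w

/-- The set of marked `lam`-partitions in the boolean-list encoding. -/
def Wset (lam n m : ℕ) : Set (List (ℕ × Bool)) :=
  {w | Ok lam 0 w ∧ wsum w = n ∧ wlen w = m}

/-- The set in the theorem statement. -/
def Aset (lam n m : ℕ) : Set (List ℕ × Finset ℕ) :=
  {p | IsMarked lam p ∧ p.1.sum = n ∧ p.1.length + p.2.card = m}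

def emap (p : List ℕ × Finset ℕ) : List (ℕ × Bool) :=
  p.1.map (fun a => (a, decide (a ∈ p.2)))

/-- Does the block continue (next part within distance `lam`)? -/
def contB (lam a : ℕ) : List (ℕ × Bool) → Bool
  | [] => false
  | x :: _ => decide (x.1 ≤ a + lam)

/-- The step map: add 1 to every part; marks move to the end of their block,
whose last part gets an extra 1. `pend` is a carried mark. -/
def up (lam : ℕ) : Bool → List (ℕ × Bool) → List (ℕ × Bool)
  | _, [] => []
  | pend, x :: t =>
    if contB lam x.1 t then (x.1 + 1, false) :: up lam (pend || x.2) t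
    else (x.1 + 1 + (pend || x.2).toNat, pend || x.2) :: up lam false t

def headLt (lam : ℕ) (w : List (ℕ × Bool)) : Bool :=
  match w with
  | [] => false
  | x :: _ => decide (x.1 < lam)

/-- The recurrence bijection. -/
def Phi (lam m : ℕ) (w : List (ℕ × Bool)) : List (ℕ × Bool) :=
  if wlen w = m then up lam false w
  else if headLt lam w then up lam true w
  else (1, false) :: up lam false w

/-- Precondition for a carried mark. -/
def pendOK (lam p : ℕ) (pend : Bool) (w : List (ℕ × Bool)) : Prop :=
  pend = true → ∃ a t, w = (a, false) :: t ∧ (lam = 2 → a % 2 = 1) ∧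
    ((p = 0 ∧ a < lam) ∨ (0 < p ∧ a = p + lam))

/-- Precondition relating the output context `q` to the input context `p`. -/
def qOK (lam p q : ℕ) (w : List (ℕ × Bool)) : Prop :=
  (p = 0 ∧ q = 0) ∨ (0 < p ∧ 0 < q ∧ q ≤ p + 1) ∨
  (0 < p ∧ q = p + 2 ∧ ∀ x ∈ w.head?, p + lam < x.1) ∨
  (p = 0 ∧ q = 1 ∧ ∀ x ∈ w.head?, lam ≤ x.1)

section lemmas
variable {lam : ℕ}

lemma good_ge3 {a : ℕ} (h : good lam a) : 3 ≤ a := by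
  unfold good at h
  split at h <;> omega

lemma good_add2 {a : ℕ} (h : good lam a) : good lam (a + 2) := by
  unfold good at h ⊢
  split at h <;> simp_all <;> omega

lemma ok_pos : ∀ (w : List (ℕ × Bool)) (p : ℕ), Ok lam p w → ∀ x ∈ w, 0 < x.1 := by
  intro w
  induction w with
  | nil => simp
  | cons x t ih =>
    intro p hp y hy
    obtain ⟨h1, h2, h3⟩ := hp
    have hx : 0 < x.1 := by split at h1 <;> omega
    rw [List.mem_cons] at hy
    rcases hy with rfl | hy
    · exact hx
    · exact ih x.1 h3 y hy

/- ------------ Part 1 : encoding A ≃ W ------------- -/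

lemma bsAux_subset (p : ℕ) (l : List ℕ) : blockStartsAux lam p l ⊆ l := by
  induction l generalizing p with
  | nil => simp [blockStartsAux]
  | cons a t ih =>
    intro x hx
    simp only [blockStartsAux, List.mem_append] at hx
    rcases hx with hx | hx
    · split at hx <;> simp_all
    · exact List.mem_cons_of_mem _ (ih a hx)

lemma mem_lp {a : ℕ} {l : List ℕ} :
    a ∈ leadingParts lam l ↔ a ∈ blockStarts lam l ∧ good lam a := by
  unfold leadingParts good
  split <;> rename_i h
  · subst h; simp [List.mem_filter]
  · simp [List.mem_filter]

lemma bs_subset (l : List ℕ) : blockStarts lam l ⊆ l := by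
  cases l with
  | nil => simp [blockStarts]
  | cons a t =>
    intro x hx
    simp only [blockStarts, List.mem_cons] at hx
    rcases hx with hx | hx
    · simp [hx]
    · exact List.mem_cons_of_mem _ (bsAux_subset a t hx)

lemma pok_lt (hl : lam = 2 ∨ lam = 3) : ∀ (l : List ℕ) (p : ℕ), POk lam p l → ∀ b ∈ l, p < b := by
  intro l
  induction l with
  | nil => simp
  | cons a t ih =>
    intro p hp b hb
    obtain ⟨h1, h2⟩ := hp
    have ha : p < a := by split at h1 <;> omega
    rw [List.mem_cons] at hb
    rcases hb with rfl | hb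
    · exact ha
    · exact lt_trans ha (ih a h2 b hb)

lemma pok_aux (hl : lam = 2 ∨ lam = 3) : ∀ (l : List ℕ) (a : ℕ), 0 < a →
    (POk lam a l ↔ (l.Chain' (fun x y => x + lam ≤ y) ∧ (∀ i ∈ l, 0 < i) ∧
      ∀ x ∈ l.head?, a + lam ≤ x)) := by
  intro l
  induction l with
  | nil => simp [POk, List.Chain', List.isChain_nil]
  | cons b t ih =>
    intro a ha
    constructor
    · rintro ⟨h1, h2⟩
      rw [if_neg (by omega)] at h1
      have hbpos : 0 < b := by omega
      rw [ih b hbpos] at h2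
      obtain ⟨hc, hp, hh⟩ := h2
      refine ⟨?_, ?_, ?_⟩
      · rw [List.Chain', List.isChain_cons]
        exact ⟨hh, hc⟩
      · intro i hi
        rw [List.mem_cons] at hi
        rcases hi with rfl | hi
        · omega
        · exact hp i hi
      · simp; omega
    · rintro ⟨hc, hp, hh⟩
      rw [List.Chain', List.isChain_cons] at hc
      have hbpos : 0 < b := hp b (by simp)
      refine ⟨?_, ?_⟩
      · rw [if_neg (by omega)]
        simpa using hh
      · rw [ih b hbpos]
        exact ⟨hc.2, fun i hi => hp i (List.mem_cons_of_mem _ hi), hc.1⟩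

lemma pok_iff_isLam (hl : lam = 2 ∨ lam = 3) (l : List ℕ) : POk lam 0 l ↔ IsLamPartition lam l := by
  cases l with
  | nil => simp [POk, IsLamPartition, List.Chain', List.isChain_nil]
  | cons a t =>
    unfold IsLamPartition
    constructor
    · rintro ⟨h1, h2⟩
      rw [if_pos rfl] at h1
      rw [pok_aux hl t a h1] at h2
      obtain ⟨hc, hp, hh⟩ := h2
      refine ⟨List.isChain_cons.2 ⟨hh, hc⟩, ?_⟩
      intro i hi
      rw [List.mem_cons] at hi
      rcases hi with rfl | hi
      · exact h1
      · exact hp i hi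
    · rintro ⟨hc, hp⟩
      rw [List.Chain', List.isChain_cons] at hc
      have ha : 0 < a := hp a (by simp)
      refine ⟨by rw [if_pos rfl]; exact ha, ?_⟩
      rw [pok_aux hl t a ha]
      exact ⟨hc.2, fun i hi => hp i (List.mem_cons_of_mem _ hi), hc.1⟩

lemma pok_nodup (hl : lam = 2 ∨ lam = 3) (l : List ℕ) (p : ℕ) (h : POk lam p l) : l.Nodup := by
  induction l generalizing p with
  | nil => simp
  | cons a t ih =>
    obtain ⟨h1, h2⟩ := h
    refine List.nodup_cons.2 ⟨?_, ih a h2⟩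
    intro hmem
    exact absurd (pok_lt hl t a h2 a hmem) (lt_irrefl a)

def bs' (lam p : ℕ) (l : List ℕ) : List ℕ :=
  if p = 0 then blockStarts lam l else blockStartsAux lam p l

lemma bs'_of_pos {a : ℕ} (ha : a ≠ 0) (t : List ℕ) : bs' lam a t = blockStartsAux lam a t :=
  if_neg ha

lemma mem_bs'_cons (p a x : ℕ) (t : List ℕ) :
    x ∈ bs' lam p (a :: t) ↔ ((p = 0 ∨ p + lam < a) ∧ x = a) ∨ x ∈ blockStartsAux lam a t := by
  unfold bs'
  by_cases hp : p = 0
  · simp only [hp, if_pos]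
    simp [blockStarts]
  · rw [if_neg hp]
    show x ∈ (if p + lam < a then [a] else []) ++ blockStartsAux lam a t ↔ _
    by_cases h : p + lam < a <;> simp [h, hp] <;> tauto

lemma ok_iff (hl : lam = 2 ∨ lam = 3) : ∀ (l : List ℕ) (p : ℕ) (f : ℕ → Bool), POk lam p l →
    (Ok lam p (l.map fun a => (a, f a)) ↔
      ∀ a ∈ l, f a = true → good lam a ∧ a ∈ bs' lam p l) := by
  intro l
  induction l with
  | nil => intro p f _; simp [Ok]
  | cons a t ih =>
    intro p f hp
    obtain ⟨h1, h2⟩ := hp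
    have hlt := pok_lt hl t a h2
    have ha : 0 < a := by split at h1 <;> omega
    have htail := ih a f h2
    constructor
    · rintro ⟨g1, g2, g3⟩ x hx hfx
      rw [List.mem_cons] at hx
      rcases hx with rfl | hx
      · obtain ⟨hg, hpos⟩ := g2 hfx
        exact ⟨hg, (mem_bs'_cons p x x t).2 (Or.inl ⟨hpos, rfl⟩)⟩
      · obtain ⟨hg, hmem⟩ := (htail.1 g3) x hx hfx
        refine ⟨hg, (mem_bs'_cons p a x t).2 (Or.inr ?_)⟩
        rwa [bs'_of_pos (by omega)] at hmem
    · intro hall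
      refine ⟨h1, ?_, ?_⟩
      · intro hfa
        obtain ⟨hg, hmem⟩ := hall a (by simp) hfa
        rw [mem_bs'_cons] at hmem
        rcases hmem with ⟨hc, _⟩ | hmem
        · exact ⟨hg, hc⟩
        · exact absurd (hlt a (bsAux_subset a t hmem)) (lt_irrefl a)
      · rw [htail]
        intro x hx hfx
        obtain ⟨hg, hmem⟩ := hall x (List.mem_cons_of_mem _ hx) hfx
        rw [mem_bs'_cons] at hmem
        refine ⟨hg, ?_⟩
        rcases hmem with ⟨_, rfl⟩ | hmem
        · exact absurd (hlt x hx) (lt_irrefl x)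
        · rwa [bs'_of_pos (by omega)]

lemma lp_sub {a : ℕ} {l : List ℕ} (h : a ∈ leadingParts lam l) : a ∈ l :=
  bs_subset l (mem_lp.1 h).1

lemma ok_pok : ∀ (w : List (ℕ × Bool)) (p : ℕ), Ok lam p w → POk lam p (w.map Prod.fst) := by
  intro w
  induction w with
  | nil => intro p _; trivial
  | cons x t ih =>
    rintro p ⟨h1, _, h3⟩
    exact ⟨h1, ih x.1 h3⟩

lemma key_unique {w : List (ℕ × Bool)} (h : (w.map Prod.fst).Nodup) :
    ∀ {a : ℕ} {x y : Bool}, (a, x) ∈ w → (a, y) ∈ w → x = y := by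
  induction w with
  | nil => simp
  | cons z t ih =>
    intro a x y hx hy
    simp only [List.map_cons, List.nodup_cons] at h
    rw [List.mem_cons] at hx hy
    rcases hx with hx | hx <;> rcases hy with hy | hy
    · injection hx.trans hy.symm with h1 h2
    · exact absurd (show z.1 ∈ t.map Prod.fst by
        rw [← hx]; exact List.mem_map.2 ⟨(a, y), hy, rfl⟩) h.1
    · exact absurd (show z.1 ∈ t.map Prod.fst by
        rw [← hy]; exact List.mem_map.2 ⟨(a, x), hx, rfl⟩) h.1
    · exact ih h.2 hx hy

lemma map_self {α : Type*} {w : List α} {f : α → α} (h : ∀ x ∈ w, f x = x) : w.map f = w := by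
  rw [List.map_congr_left h]
  simp

lemma emap_fst (l : List ℕ) (J : Finset ℕ) : (emap (l, J)).map Prod.fst = l := by
  unfold emap
  rw [List.map_map, show Prod.fst ∘ (fun a => (a, decide (a ∈ J))) = id from rfl, List.map_id]

lemma filter_card {l : List ℕ} {J : Finset ℕ} (hn : l.Nodup) (hJ : ∀ a ∈ J, a ∈ l) :
    (l.filter (fun a => decide (a ∈ J))).length = J.card := by
  classical
  have hnd : (l.filter (fun a => decide (a ∈ J))).Nodup := hn.filter _
  rw [← List.toFinset_card_of_nodup hnd]
  congr 1
  ext x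
  simp only [List.mem_toFinset, List.mem_filter, decide_eq_true_eq]
  exact ⟨fun h => h.2, fun h => ⟨hJ x h, h⟩⟩

lemma part1 (hl : lam = 2 ∨ lam = 3) (n m : ℕ) : (Aset lam n m).ncard = (Wset lam n m).ncard := by
  classical
  have hinj : Set.InjOn emap (Aset lam n m) := by
    rintro ⟨l₁, J₁⟩ h₁ ⟨l₂, J₂⟩ h₂ heq
    obtain ⟨⟨hpart₁, hJ₁⟩, _, _⟩ := h₁
    obtain ⟨⟨hpart₂, hJ₂⟩, _, _⟩ := h₂
    have hl12 : l₁ = l₂ := by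
      have h' := congrArg (List.map Prod.fst) heq
      rwa [emap_fst, emap_fst] at h'
    subst hl12
    have hmk := List.map_inj_left.1 heq
    have hJ : J₁ = J₂ := by
      ext x
      constructor
      · intro hx
        have hxl : x ∈ l₁ := lp_sub (hJ₁ x hx)
        have := hmk x hxl
        simp only [Prod.mk.injEq, decide_eq_decide] at this
        exact this.2.1 hx
      · intro hx
        have hxl : x ∈ l₁ := lp_sub (hJ₂ x hx)
        have := hmk x hxl
        simp only [Prod.mk.injEq, decide_eq_decide] at this
        exact this.2.2 hx
    rw [hJ]
  have himg : emap '' (Aset lam n m) = Wset lam n m := by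
    ext w
    constructor
    · rintro ⟨⟨l, J⟩, ⟨⟨hpart, hmks⟩, hsum, hlen⟩, rfl⟩
      have hpok : POk lam 0 l := (pok_iff_isLam hl l).2 hpart
      have hJl : ∀ a ∈ J, a ∈ l := fun a ha => lp_sub (hmks a ha)
      refine ⟨?_, ?_, ?_⟩
      · apply (ok_iff hl l 0 _ hpok).2
        intro a ha hfa
        have haJ : a ∈ J := by simpa using hfa
        have h2 := mem_lp.1 (hmks a haJ)
        exact ⟨h2.2, by unfold bs'; rw [if_pos rfl]; exact h2.1⟩
      · show (List.map Prod.fst (emap (l, J))).sum = n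
        rw [emap_fst]
        exact hsum
      · have hcount : nmarks (emap (l, J)) = J.card := by
          unfold nmarks emap
          rw [List.countP_map,
            show ((fun x : ℕ × Bool => x.2) ∘ fun a => (a, decide (a ∈ J))) =
              (fun a => decide (a ∈ J)) from rfl,
            List.countP_eq_length_filter]
          exact filter_card (pok_nodup hl l 0 hpok) hJl
        unfold wlen
        rw [hcount]
        simpa [emap] using hlen
    · rintro ⟨hok, hsum, hlen⟩
      set l := w.map Prod.fst with hldef
      set J := ((w.filter (fun x => x.2)).map Prod.fst).toFinset with hJdef
      have hpokl : POk lam 0 l := ok_pok w 0 hok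
      have hnodup : l.Nodup := pok_nodup hl l 0 hpokl
      have hval : emap (l, J) = w := by
        show (w.map Prod.fst).map (fun a => (a, decide (a ∈ J))) = w
        rw [List.map_map]
        apply map_self
        intro x hx
        show (x.1, decide (x.1 ∈ J)) = x
        have h2 : decide (x.1 ∈ J) = x.2 := by
          cases hx2 : x.2 with
          | true =>
            simp only [decide_eq_true_eq]
            rw [hJdef, List.mem_toFinset, List.mem_map]
            exact ⟨x, List.mem_filter.2 ⟨hx, by simp [hx2]⟩, rfl⟩
          | false =>
            simp only [decide_eq_false_iff_not]
            intro hmem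
            rw [hJdef, List.mem_toFinset, List.mem_map] at hmem
            obtain ⟨y, hyf, hy1⟩ := hmem
            rw [List.mem_filter] at hyf
            have hy2 : y.2 = true := by simpa using hyf.2
            have hyw : (x.1, true) ∈ w := by
              have hyx : y = (x.1, true) := Prod.ext hy1 hy2
              rw [hyx] at hyf
              exact hyf.1
            have hxw : (x.1, false) ∈ w := by
              have : x = (x.1, false) := Prod.ext rfl hx2
              rwa [this] at hx
            exact absurd (key_unique hnodup hyw hxw) (by simp)
        rw [h2]
      have hmem_l : ∀ a ∈ J, a ∈ l := by
        intro a ha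
        rw [hJdef, List.mem_toFinset, List.mem_map] at ha
        obtain ⟨y, hyf, hy1⟩ := ha
        rw [List.mem_filter] at hyf
        rw [hldef, List.mem_map]
        exact ⟨y, hyf.1, hy1⟩
      have hcard : J.card = nmarks w := by
        have hsubl : ((w.filter (fun x => x.2)).map Prod.fst).Sublist (w.map Prod.fst) :=
          (List.filter_sublist (l := w)).map Prod.fst
        have hnd : ((w.filter (fun x => x.2)).map Prod.fst).Nodup := hnodup.sublist hsubl
        rw [hJdef, List.toFinset_card_of_nodup hnd, List.length_map]
        unfold nmarks
        rw [List.countP_eq_length_filter]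
      refine ⟨(l, J), ⟨⟨?_, ?_⟩, ?_, ?_⟩, hval⟩
      · exact (pok_iff_isLam hl l).1 hpokl
      · intro a ha
        have hok' : Ok lam 0 (emap (l, J)) := by rw [hval]; exact hok
        have hal : a ∈ l := hmem_l a ha
        have := (ok_iff hl l 0 (fun a => decide (a ∈ J)) hpokl).1 hok' a hal (by simpa)
        refine mem_lp.2 ⟨?_, this.1⟩
        have hbs := this.2
        unfold bs' at hbs
        rwa [if_pos rfl] at hbs
      · exact hsum
      · show l.length + J.card = m
        rw [hcard, hldef, List.length_map]
        exact hlen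
  rw [← himg, Set.ncard_image_of_injOn hinj]

/- ------------ Part 2 : the recurrence ------------- -/

lemma wsum_cons (x : ℕ × Bool) (t : List (ℕ × Bool)) : wsum (x :: t) = x.1 + wsum t := by
  simp [wsum]

lemma nmarks_cons (x : ℕ × Bool) (t : List (ℕ × Bool)) :
    nmarks (x :: t) = x.2.toNat + nmarks t := by
  simp only [nmarks, List.countP_cons]
  cases h : x.2 <;> simp [h] <;> omega

lemma wlen_cons (x : ℕ × Bool) (t : List (ℕ × Bool)) :
    wlen (x :: t) = 1 + x.2.toNat + wlen t := by
  simp only [wlen, nmarks_cons, List.length_cons]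
  omega

lemma up_cons (pend : Bool) (a : ℕ) (mk : Bool) (t : List (ℕ × Bool)) :
    up lam pend ((a, mk) :: t) =
      if contB lam a t then (a + 1, false) :: up lam (pend || mk) t
      else (a + 1 + (pend || mk).toNat, pend || mk) :: up lam false t := rfl

lemma good_shift (hl : lam = 2 ∨ lam = 3) {p a : ℕ}
    (h : (p = 0 ∧ a < lam) ∨ (0 < p ∧ a = p + lam)) (hpar : lam = 2 → a % 2 = 1)
    (ha : 0 < a) : good lam (a + 2) := by
  unfold good
  rcases hl with rfl | rfl
  · rw [if_pos rfl]
    have := hpar rfl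
    constructor <;> omega
  · rw [if_neg (by norm_num)]
    omega

lemma up_spec (hl : lam = 2 ∨ lam = 3) : ∀ (w : List (ℕ × Bool)) (p q : ℕ) (pend : Bool),
    Ok lam p w → pendOK lam p pend w → qOK lam p q w →
    Ok lam q (up lam pend w) ∧
    wsum (up lam pend w) = wsum w + w.length + pend.toNat + nmarks w ∧
    wlen (up lam pend w) = wlen w + pend.toNat ∧
    (up lam pend w).length = w.length := by
  have hlam2 : 2 ≤ lam := by rcases hl with rfl | rfl <;> norm_num
  intro w
  induction w with
  | nil =>
    intro p q pend _ hpend _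
    have hp : pend = false := by
      cases pend
      · rfl
      · obtain ⟨a, t, heq, -⟩ := hpend rfl
        exact absurd heq (by simp)
    subst hp
    exact ⟨trivial, rfl, rfl, rfl⟩
  | cons x t ih =>
    obtain ⟨a, mk⟩ := x
    intro p q pend hOk hpend hq
    obtain ⟨hgap, hmk, hOkt⟩ := hOk
    have ha : 0 < a := by split at hgap <;> omega
    have hplam : p ≠ 0 → p + lam ≤ a := by intro h; rwa [if_neg h] at hgap
    -- mk and pend are not both true
    have hnb : pend = true → mk = false := by
      intro h
      obtain ⟨a', t', heq, -⟩ := hpend h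
      cases heq
      rfl
    have hbit : (pend || mk).toNat = pend.toNat + mk.toNat := by
      cases hp : pend
      · simp
      · rw [hnb hp]; simp
    -- the q-context bound
    have hqa : q = 0 ∨ q + lam ≤ a + 1 := by
      rcases hq with ⟨hp0, hq0⟩ | ⟨hp1, hq1, hq2⟩ | ⟨hp1, hq1, hq2⟩ | ⟨hp0, hq1, hq2⟩
      · left; exact hq0
      · right; have := hplam (by omega); omega
      · right
        have := hq2 (a, mk) (by simp)
        omega
      · right
        have := hq2 (a, mk) (by simp)
        omega
    -- parity of a when a mark is being placed or carried
    have hpar : (pend = true ∨ mk = true) → lam = 2 → a % 2 = 1 := by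
      rintro (h | h) hl2
      · obtain ⟨a', t', heq, hpar', -⟩ := hpend h
        injection heq with h1 h2
        injection h1 with h3 h4
        subst h3
        exact hpar' hl2
      · have := (hmk h).1
        unfold good at this
        rw [if_pos hl2] at this
        exact this.2
    have hgood2 : (pend || mk) = true → good lam (a + 2) := by
      intro h
      cases hp : pend with
      | true =>
        obtain ⟨a', t', heq, hpar', hcase⟩ := hpend hp
        injection heq with h1 h2
        injection h1 with h3 h4
        subst h3
        exact good_shift hl hcase hpar' ha
      | false =>
        have hmkt : mk = true := by simpa [hp] using h
        exact good_add2 (hmk hmkt).1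
    rw [up_cons]
    cases hcont : contB lam a t with
    | true =>
      rw [if_pos rfl]
      -- t is nonempty with head value a + lam
      obtain ⟨y, t', rfl⟩ : ∃ y t', t = y :: t' := by
        cases t with
        | nil => simp [contB] at hcont
        | cons y t' => exact ⟨y, t', rfl⟩
      have hyle : y.1 ≤ a + lam := by simpa [contB] using hcont
      have hyge : a + lam ≤ y.1 := by
        obtain ⟨hg, -, -⟩ := hOkt
        rwa [if_neg (by omega)] at hg
      have hyeq : y.1 = a + lam := le_antisymm hyle hyge
      have hymk : y.2 = false := by
        obtain ⟨-, hm, -⟩ := hOkt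
        cases hy2 : y.2
        · rfl
        · have := (hm hy2).2
          omega
      have hIH := ih a (a + 1) (pend || mk) hOkt ?_ ?_
      rotate_left
      · intro h
        refine ⟨y.1, t', by rw [← hymk], ?_, Or.inr ⟨ha, hyeq⟩⟩
        intro hl2
        have := hpar (Bool.or_eq_true_iff.1 h) hl2
        omega
      · exact Or.inr (Or.inl ⟨ha, by omega, by omega⟩)
      obtain ⟨hOk', hsum', hlen', hlength'⟩ := hIH
      refine ⟨⟨?_, by simp, hOk'⟩, ?_, ?_, ?_⟩
      · rcases hqa with h | h
        · rw [if_pos h]; omega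
        · split <;> omega
      · simp only [wsum_cons, nmarks_cons, List.length_cons, hsum', hbit, Bool.toNat_false]
        omega
      · simp only [wlen_cons, hlen', hbit, Bool.toNat_false]
        omega
      · simp only [List.length_cons, hlength']
    | false =>
      rw [if_neg (by simp)]
      have hhead : ∀ z ∈ t.head?, a + lam < z.1 := by
        intro z hz
        cases t with
        | nil => simp at hz
        | cons y t' =>
          simp only [List.head?_cons, Option.mem_def, Option.some.injEq] at hz
          subst hz
          rw [show contB lam a (y :: t') = decide (y.1 ≤ a + lam) from rfl] at hcont
          simp only [decide_eq_false_iff_not, not_le] at hcont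
          exact hcont
      have hIH := ih a (a + 1 + (pend || mk).toNat) false hOkt (by simp [pendOK]) ?_
      rotate_left
      · cases hb : pend || mk
        · exact Or.inr (Or.inl ⟨ha, by simp, by simp⟩)
        · exact Or.inr (Or.inr (Or.inl ⟨ha, by simp, hhead⟩))
      obtain ⟨hOk', hsum', hlen', hlength'⟩ := hIH
      refine ⟨⟨?_, ?_, hOk'⟩, ?_, ?_, ?_⟩
      · rcases hqa with h | h
        · rw [if_pos h]; omega
        · split <;> omega
      · intro hb
        have hb' : (pend || mk) = true := hb
        refine ⟨by rw [hb']; exact hgood2 hb', ?_⟩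
        rcases hqa with h | h
        · left; exact h
        · right; simp only [hb', Bool.toNat_true]; omega
      · simp only [wsum_cons, nmarks_cons, List.length_cons, hsum', hbit, Bool.toNat_false]
        omega
      · simp only [wlen_cons, hlen', hbit, Bool.toNat_false]
        omega
      · simp only [List.length_cons, hlength']

lemma up_cons_ne (pend : Bool) (a : ℕ) (mk : Bool) (t : List (ℕ × Bool)) :
    up lam pend ((a, mk) :: t) ≠ [] := by
  rw [up_cons]; split <;> simp

lemma up_head (pend : Bool) (a : ℕ) (mk : Bool) (t : List (ℕ × Bool)) :
    ∀ x ∈ (up lam pend ((a, mk) :: t)).head?, x.1 = a + 1 + x.2.toNat := by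
  rw [up_cons]
  split
  · rintro x hx
    simp only [List.head?_cons, Option.mem_def, Option.some.injEq] at hx
    subst hx; simp
  · rintro x hx
    simp only [List.head?_cons, Option.mem_def, Option.some.injEq] at hx
    subst hx
    cases pend || mk <;> simp

lemma up_head_exists (pend : Bool) (a : ℕ) (mk : Bool) (t : List (ℕ × Bool)) :
    ∃ x, (up lam pend ((a, mk) :: t)).head? = some x := by
  rw [up_cons]; split <;> exact ⟨_, rfl⟩

lemma not_pend_mark (hl : lam = 2 ∨ lam = 3) {p a : ℕ}
    (h1 : (p = 0 ∧ a < lam) ∨ (0 < p ∧ a = p + lam))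
    (h2 : good lam a ∧ (p = 0 ∨ p + lam < a)) : False := by
  have h3 := good_ge3 h2.1
  have hlam3 : lam ≤ 3 := by rcases hl with rfl | rfl <;> norm_num
  rcases h1 with ⟨rfl, h⟩ | ⟨hp, rfl⟩
  · omega
  · rcases h2.2 with h | h <;> omega

lemma up_inj (hl : lam = 2 ∨ lam = 3) : ∀ (w₁ w₂ : List (ℕ × Bool)) (p : ℕ) (pend₁ pend₂ : Bool),
    Ok lam p w₁ → Ok lam p w₂ → pendOK lam p pend₁ w₁ → pendOK lam p pend₂ w₂ →
    up lam pend₁ w₁ = up lam pend₂ w₂ → pend₁ = pend₂ ∧ w₁ = w₂ := by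
  have hlam2 : 2 ≤ lam := by rcases hl with rfl | rfl <;> norm_num
  intro w₁
  induction w₁ with
  | nil =>
    intro w₂ p pend₁ pend₂ _ _ hp₁ hp₂ heq
    cases w₂ with
    | nil =>
      have h1 : pend₁ = false := by
        cases pend₁
        · rfl
        · obtain ⟨a, t, h, -⟩ := hp₁ rfl; exact absurd h (by simp)
      have h2 : pend₂ = false := by
        cases pend₂
        · rfl
        · obtain ⟨a, t, h, -⟩ := hp₂ rfl; exact absurd h (by simp)
      exact ⟨h1.trans h2.symm, rfl⟩
    | cons y t₂ =>
      obtain ⟨a₂, mk₂⟩ := y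
      exact absurd heq.symm (up_cons_ne pend₂ a₂ mk₂ t₂)
  | cons x t₁ ih =>
    obtain ⟨a₁, mk₁⟩ := x
    intro w₂ p pend₁ pend₂ hOk₁ hOk₂ hp₁ hp₂ heq
    cases w₂ with
    | nil => exact absurd heq (up_cons_ne pend₁ a₁ mk₁ t₁)
    | cons y t₂ =>
      obtain ⟨a₂, mk₂⟩ := y
      obtain ⟨hgap₁, hmk₁, hOkt₁⟩ := hOk₁
      obtain ⟨hgap₂, hmk₂, hOkt₂⟩ := hOk₂
      have ha₁ : 0 < a₁ := by split at hgap₁ <;> omega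
      have ha₂ : 0 < a₂ := by split at hgap₂ <;> omega
      -- heads agree, so a₁ = a₂
      obtain ⟨z, hz⟩ := up_head_exists (lam := lam) pend₁ a₁ mk₁ t₁
      have hz₂ : (up lam pend₂ ((a₂, mk₂) :: t₂)).head? = some z := by rw [← heq]; exact hz
      have e₁ := up_head pend₁ a₁ mk₁ t₁ z hz
      have e₂ := up_head pend₂ a₂ mk₂ t₂ z hz₂
      have haeq : a₁ = a₂ := by omega
      subst haeq
      -- pend info
      have hinfo₁ : pend₁ = true → mk₁ = false ∧ (lam = 2 → a₁ % 2 = 1) ∧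
          ((p = 0 ∧ a₁ < lam) ∨ (0 < p ∧ a₁ = p + lam)) := by
        intro h
        obtain ⟨a', t', h1, h2, h3⟩ := hp₁ h
        cases h1
        exact ⟨rfl, h2, h3⟩
      have hinfo₂ : pend₂ = true → mk₂ = false ∧ (lam = 2 → a₁ % 2 = 1) ∧
          ((p = 0 ∧ a₁ < lam) ∨ (0 < p ∧ a₁ = p + lam)) := by
        intro h
        obtain ⟨a', t', h1, h2, h3⟩ := hp₂ h
        cases h1
        exact ⟨rfl, h2, h3⟩
      -- from equal or-bits, derive equal components
      have disamb : (pend₁ || mk₁) = (pend₂ || mk₂) → pend₁ = pend₂ ∧ mk₁ = mk₂ := by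
        intro hb
        cases hq₁ : pend₁ <;> cases hq₂ : pend₂
        · rw [hq₁, hq₂] at hb; simpa using hb
        · exfalso
          have h2 := hinfo₂ hq₂
          rw [hq₁, hq₂] at hb
          have hmk₁t : mk₁ = true := by simpa using hb.symm
          exact not_pend_mark hl h2.2.2 ⟨(hmk₁ hmk₁t).1, (hmk₁ hmk₁t).2⟩
        · exfalso
          have h1 := hinfo₁ hq₁
          rw [hq₁, hq₂] at hb
          have hmk₂t : mk₂ = true := by simpa using hb
          exact not_pend_mark hl h1.2.2 ⟨(hmk₂ hmk₂t).1, (hmk₂ hmk₂t).2⟩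
        · refine ⟨rfl, ?_⟩
          rw [(hinfo₁ hq₁).1, (hinfo₂ hq₂).1]
      -- branch analysis
      cases hc₁ : contB lam a₁ t₁ <;> cases hc₂ : contB lam a₁ t₂
      · -- both block ends
        rw [up_cons, up_cons, if_neg (by rw [hc₁]; simp), if_neg (by rw [hc₂]; simp)] at heq
        injection heq with h5 h6
        injection h5 with h5a h5b
        obtain ⟨hpe, hme⟩ := disamb h5b
        obtain ⟨-, hteq⟩ := ih t₂ a₁ false false hOkt₁ hOkt₂ (by simp [pendOK]) (by simp [pendOK]) h6
        exact ⟨hpe, by rw [hme, hteq]⟩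
      · -- w₁ ends a block, w₂ continues: impossible
        exfalso
        rw [up_cons, up_cons, if_neg (by rw [hc₁]; simp), if_pos hc₂] at heq
        injection heq with h5 h6
        injection h5 with h5a h5b
        -- bits equal false
        have hb₁ : (pend₁ || mk₁) = false := h5b
        -- t₂ nonempty with head a₁ + lam; t₁ empty or head > a₁ + lam
        obtain ⟨y₂, s₂, rfl⟩ : ∃ y s, t₂ = y :: s := by
          cases t₂ with
          | nil => simp [contB] at hc₂
          | cons y s => exact ⟨y, s, rfl⟩
        have hy₂ : y₂.1 = a₁ + lam := by
          have h1 : y₂.1 ≤ a₁ + lam := by simpa [contB] using hc₂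
          obtain ⟨hg, -, -⟩ := hOkt₂
          rw [if_neg (by omega)] at hg
          omega
        cases t₁ with
        | nil => exact absurd h6.symm (up_cons_ne _ y₂.1 y₂.2 s₂)
        | cons y₁ s₁ =>
          have hy₁ : a₁ + lam < y₁.1 := by
            have h1 : ¬ (y₁.1 ≤ a₁ + lam) := by
              rw [show contB lam a₁ (y₁ :: s₁) = decide (y₁.1 ≤ a₁ + lam) from rfl] at hc₁
              simpa using hc₁
            omega
          obtain ⟨z', hz'⟩ := up_head_exists (lam := lam) false y₁.1 y₁.2 s₁
          have hz'₂ : (up lam (pend₂ || mk₂) ((y₂.1, y₂.2) :: s₂)).head? = some z' := by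
            rw [← h6]
            simpa using hz'
          have f₁ := up_head false y₁.1 y₁.2 s₁ z' (by simpa using hz')
          have f₂ := up_head (pend₂ || mk₂) y₂.1 y₂.2 s₂ z' hz'₂
          omega
      · -- w₁ continues, w₂ ends a block: impossible (symmetric)
        exfalso
        rw [up_cons, up_cons, if_pos hc₁, if_neg (by rw [hc₂]; simp)] at heq
        injection heq with h5 h6
        injection h5 with h5a h5b
        obtain ⟨y₁, s₁, rfl⟩ : ∃ y s, t₁ = y :: s := by
          cases t₁ with
          | nil => simp [contB] at hc₁
          | cons y s => exact ⟨y, s, rfl⟩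
        have hy₁ : y₁.1 = a₁ + lam := by
          have h1 : y₁.1 ≤ a₁ + lam := by simpa [contB] using hc₁
          obtain ⟨hg, -, -⟩ := hOkt₁
          rw [if_neg (by omega)] at hg
          omega
        cases t₂ with
        | nil => exact absurd h6 (up_cons_ne _ y₁.1 y₁.2 s₁)
        | cons y₂ s₂ =>
          have hy₂ : a₁ + lam < y₂.1 := by
            have h1 : ¬ (y₂.1 ≤ a₁ + lam) := by
              rw [show contB lam a₁ (y₂ :: s₂) = decide (y₂.1 ≤ a₁ + lam) from rfl] at hc₂
              simpa using hc₂
            omega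
          obtain ⟨z', hz'⟩ := up_head_exists (lam := lam) (pend₁ || mk₁) y₁.1 y₁.2 s₁
          have hz'₂ : (up lam false ((y₂.1, y₂.2) :: s₂)).head? = some z' := by
            rw [← h6]
            simpa using hz'
          have f₁ := up_head (pend₁ || mk₁) y₁.1 y₁.2 s₁ z' (by simpa using hz')
          have f₂ := up_head false y₂.1 y₂.2 s₂ z' hz'₂
          omega
      · -- both continue
        rw [up_cons, up_cons, if_pos hc₁, if_pos hc₂] at heq
        injection heq with h5 h6
        -- tails: build pendOK for them
        obtain ⟨y₁, s₁, rfl⟩ : ∃ y s, t₁ = y :: s := by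
          cases t₁ with
          | nil => simp [contB] at hc₁
          | cons y s => exact ⟨y, s, rfl⟩
        obtain ⟨y₂, s₂, rfl⟩ : ∃ y s, t₂ = y :: s := by
          cases t₂ with
          | nil => simp [contB] at hc₂
          | cons y s => exact ⟨y, s, rfl⟩
        have hy₁ : y₁.1 = a₁ + lam := by
          have h1 : y₁.1 ≤ a₁ + lam := by simpa [contB] using hc₁
          obtain ⟨hg, -, -⟩ := hOkt₁
          rw [if_neg (by omega)] at hg
          omega
        have hy₂ : y₂.1 = a₁ + lam := by
          have h1 : y₂.1 ≤ a₁ + lam := by simpa [contB] using hc₂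
          obtain ⟨hg, -, -⟩ := hOkt₂
          rw [if_neg (by omega)] at hg
          omega
        have hym₁ : y₁.2 = false := by
          obtain ⟨-, hm, -⟩ := hOkt₁
          cases hb : y₁.2
          · rfl
          · have := (hm hb).2; omega
        have hym₂ : y₂.2 = false := by
          obtain ⟨-, hm, -⟩ := hOkt₂
          cases hb : y₂.2
          · rfl
          · have := (hm hb).2; omega
        have hpar₁ : (pend₁ || mk₁) = true → lam = 2 → a₁ % 2 = 1 := by
          intro h hl2
          cases hq : pend₁
          · have hmkt : mk₁ = true := by simpa [hq] using h
            have := (hmk₁ hmkt).1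
            unfold good at this
            rw [if_pos hl2] at this
            exact this.2
          · exact (hinfo₁ hq).2.1 hl2
        have hpar₂ : (pend₂ || mk₂) = true → lam = 2 → a₁ % 2 = 1 := by
          intro h hl2
          cases hq : pend₂
          · have hmkt : mk₂ = true := by simpa [hq] using h
            have := (hmk₂ hmkt).1
            unfold good at this
            rw [if_pos hl2] at this
            exact this.2
          · exact (hinfo₂ hq).2.1 hl2
        have hIH := ih (y₂ :: s₂) a₁ (pend₁ || mk₁) (pend₂ || mk₂) hOkt₁ hOkt₂ ?_ ?_ h6
        rotate_left
        · intro h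
          refine ⟨y₁.1, s₁, by rw [← hym₁], ?_, Or.inr ⟨ha₁, hy₁⟩⟩
          intro hl2
          have := hpar₁ h hl2
          omega
        · intro h
          refine ⟨y₂.1, s₂, by rw [← hym₂], ?_, Or.inr ⟨ha₂, hy₂⟩⟩
          intro hl2
          have := hpar₂ h hl2
          omega
        obtain ⟨hbe, hteq⟩ := hIH
        obtain ⟨hpe, hme⟩ := disamb hbe
        exact ⟨hpe, by rw [hme, hteq]⟩

lemma choose (hl : lam = 2 ∨ lam = 3) {p a : ℕ} (hpar : lam = 2 → a % 2 = 1)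
    (hbig : (p = 0 ∧ 0 < a) ∨ (0 < p ∧ p + lam ≤ a)) :
    ∃ pend mk : Bool, (pend || mk) = true ∧ pend.toNat + mk.toNat = 1 ∧
      (pend = true → mk = false) ∧
      (mk = true → good lam a ∧ (p = 0 ∨ p + lam < a)) ∧
      (pend = true → (lam = 2 → a % 2 = 1) ∧ ((p = 0 ∧ a < lam) ∨ (0 < p ∧ a = p + lam))) := by
  by_cases hc : (p = 0 ∧ a < lam) ∨ (0 < p ∧ a = p + lam)
  · exact ⟨true, false, by simp, by simp, fun _ => rfl, by simp, fun _ => ⟨hpar, hc⟩⟩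
  · refine ⟨false, true, by simp, by simp, by simp, fun _ => ⟨?_, ?_⟩, by simp⟩
    · unfold good
      rcases hl with rfl | rfl
      · rw [if_pos rfl]
        have := hpar rfl
        omega
      · rw [if_neg (by norm_num)]
        omega
    · rcases hbig with ⟨h1, h2⟩ | ⟨h1, h2⟩
      · left; exact h1
      · right; omega

lemma up_surj (hl : lam = 2 ∨ lam = 3) : ∀ (o : List (ℕ × Bool)) (p q : ℕ), Ok lam q o →
    ((p = 0 ∧ q = 0) ∨ (0 < p ∧ q = p + 1) ∨ (0 < p ∧ q = p + 2) ∨ (p = 0 ∧ q = 1)) →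
    (p = 0 → q = 0 → ∀ x ∈ o.head?, 2 ≤ x.1) →
    ∃ pend w, up lam pend w = o ∧ Ok lam p w ∧ pendOK lam p pend w ∧ qOK lam p q w ∧
      wlen w + pend.toNat = wlen o ∧ w.length = o.length := by
  have hlam2 : 2 ≤ lam := by rcases hl with rfl | rfl <;> norm_num
  have hlam3 : lam ≤ 3 := by rcases hl with rfl | rfl <;> norm_num
  intro o
  induction o with
  | nil =>
    intro p q _ hPQ _
    refine ⟨false, [], rfl, trivial, by simp [pendOK], ?_, by simp, rfl⟩
    rcases hPQ with ⟨h1, h2⟩ | ⟨h1, h2⟩ | ⟨h1, h2⟩ | ⟨h1, h2⟩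
    · exact Or.inl ⟨h1, h2⟩
    · exact Or.inr (Or.inl ⟨h1, by omega, by omega⟩)
    · exact Or.inr (Or.inr (Or.inl ⟨h1, h2, by simp⟩))
    · exact Or.inr (Or.inr (Or.inr ⟨h1, h2, by simp⟩))
  | cons x o' ih =>
    obtain ⟨v, mkv⟩ := x
    intro p q hOk hPQ hhead
    obtain ⟨hgapq, hmkv, hOko'⟩ := hOk
    -- materialize arithmetic facts
    have hq_ge : q = 0 ∨ q + lam ≤ v := by
      by_cases h : q = 0
      · exact Or.inl h
      · right; rwa [if_neg h] at hgapq
    have hv : 0 < v := by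
      rcases hq_ge with h | h
      · rw [if_pos h] at hgapq; exact hgapq
      · omega
    have hstr : mkv.toNat = 0 ∨ (mkv.toNat = 1 ∧ 3 ≤ v ∧ good lam v ∧ (q = 0 ∨ q + lam < v)) := by
      cases h : mkv
      · left; rfl
      · right
        exact ⟨by simp [h], good_ge3 (hmkv h).1, (hmkv h).1, (hmkv h).2⟩
    have h2v : ¬(p = 0 ∧ q = 0) ∨ 2 ≤ v := by
      by_cases h : p = 0 ∧ q = 0
      · right; exact hhead h.1 h.2 (v, mkv) (by simp)
      · left; exact h
    have hstr' : mkv.toNat = 0 ∨ (mkv.toNat = 1 ∧ 3 ≤ v ∧ (q = 0 ∨ q + lam < v)) := by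
      rcases hstr with h | ⟨h1, h2, h3, h4⟩
      · left; exact h
      · right; exact ⟨h1, h2, h4⟩
    set a := v - 1 - mkv.toNat with ha_def
    have hveq : v = a + 1 + mkv.toNat := by omega
    have key : (0 < a) ∧ (0 < p → p + lam ≤ a) ∧ (0 < p → q = p + 2 → p + lam < a) ∧
        (p = 0 → q = 1 → lam ≤ a) := by
      rcases hPQ with ⟨h1, h2⟩ | ⟨h1, h2⟩ | ⟨h1, h2⟩ | ⟨h1, h2⟩ <;> omega
    obtain ⟨ha0, hA2, hA3, hA4⟩ := key
    -- apply the induction hypothesis with context (a, v)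
    have hIH := ih a v hOko' ?_ (by intro h; omega)
    rotate_left
    · rcases hstr' with h | ⟨h1, h2, h3⟩
      · exact Or.inr (Or.inl ⟨ha0, by omega⟩)
      · exact Or.inr (Or.inr (Or.inl ⟨ha0, by omega⟩))
    obtain ⟨pend', w', hup', hOkw', hpendOK', hqOK', hlen', hlength'⟩ := hIH
    -- the new head's qOK, shared
    have hqOKnew : ∀ mk : Bool, qOK lam p q ((a, mk) :: w') := by
      intro mk
      rcases hPQ with ⟨h1, h2⟩ | ⟨h1, h2⟩ | ⟨h1, h2⟩ | ⟨h1, h2⟩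
      · exact Or.inl ⟨h1, h2⟩
      · exact Or.inr (Or.inl ⟨h1, by omega, by omega⟩)
      · refine Or.inr (Or.inr (Or.inl ⟨h1, h2, ?_⟩))
        intro z hz
        simp only [List.head?_cons, Option.mem_def, Option.some.injEq] at hz
        subst hz
        exact hA3 h1 h2
      · refine Or.inr (Or.inr (Or.inr ⟨h1, h2, ?_⟩))
        intro z hz
        simp only [List.head?_cons, Option.mem_def, Option.some.injEq] at hz
        subst hz
        exact hA4 h1 h2
    have hgapnew : (if p = 0 then 0 < a else p + lam ≤ a) := by
      split
      · exact ha0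
      · exact hA2 (by omega)
    cases hcB : contB lam a w' with
    | false =>
      -- block-end case: pend' must be false, and the bit equals mkv
      have hpf : pend' = false := by
        cases hp' : pend'
        · rfl
        · exfalso
          obtain ⟨a', t', heq, hpar', hcase⟩ := hpendOK' hp'
          rcases hcase with ⟨h0, _⟩ | ⟨_, hEq⟩
          · omega
          · subst heq
            rw [show contB lam a ((a', false) :: t') = decide (a' ≤ a + lam) from rfl] at hcB
            simp only [decide_eq_false_iff_not, not_le] at hcB
            omega
      subst hpf
      -- choose the bits
      have hbits : ∃ pend mk : Bool, (pend || mk) = mkv ∧ pend.toNat + mk.toNat = mkv.toNat ∧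
          (mk = true → good lam a ∧ (p = 0 ∨ p + lam < a)) ∧
          (pend = true → mk = false ∧ (lam = 2 → a % 2 = 1) ∧
            ((p = 0 ∧ a < lam) ∨ (0 < p ∧ a = p + lam))) := by
        cases hmv : mkv
        · exact ⟨false, false, rfl, rfl, by simp, by simp⟩
        · have hm1 : mkv.toNat = 1 := by simp [hmv]
          have hparA : lam = 2 → a % 2 = 1 := by
            intro hl2
            have hg := (hmkv hmv).1
            unfold good at hg
            rw [if_pos hl2] at hg
            omega
          have hbig : (p = 0 ∧ 0 < a) ∨ (0 < p ∧ p + lam ≤ a) := by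
            rcases Nat.eq_zero_or_pos p with h | h
            · exact Or.inl ⟨h, ha0⟩
            · exact Or.inr ⟨h, hA2 h⟩
          obtain ⟨pend, mk, hor, hsum1, hpm, hmkval, hpendval⟩ := choose hl hparA hbig
          exact ⟨pend, mk, hor, by simpa using hsum1, hmkval,
            fun h => ⟨hpm h, (hpendval h).1, (hpendval h).2⟩⟩
      obtain ⟨pend, mk, hor, hsum1, hmkval, hpendval⟩ := hbits
      refine ⟨pend, (a, mk) :: w', ?_, ⟨hgapnew, hmkval, hOkw'⟩, ?_, hqOKnew mk, ?_, ?_⟩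
      · rw [up_cons, if_neg (by rw [hcB]; simp), hor, hup',
          show a + 1 + mkv.toNat = v from by omega]
      · intro h
        obtain ⟨hmf, hpar, hcase⟩ := hpendval h
        exact ⟨a, w', by rw [hmf], hpar, hcase⟩
      · have h1 : wlen ((a, mk) :: w') = 1 + mk.toNat + wlen w' := wlen_cons _ _
        have h2 : wlen ((v, mkv) :: o') = 1 + mkv.toNat + wlen o' := wlen_cons _ _
        simp only [Bool.toNat_false, add_zero] at hlen'
        rw [h1, h2]
        omega
      · simp [hlength']
    | true =>
      -- continue case: w' is nonempty with head value a + lam, and mkv must be false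
      obtain ⟨z, s, rfl⟩ : ∃ z s, w' = z :: s := by
        cases w' with
        | nil => simp [contB] at hcB
        | cons z s => exact ⟨z, s, rfl⟩
      have hz_le : z.1 ≤ a + lam := by
        rw [show contB lam a (z :: s) = decide (z.1 ≤ a + lam) from rfl] at hcB
        simpa using hcB
      have hz_ge : a + lam ≤ z.1 := by
        obtain ⟨hg, -, -⟩ := hOkw'
        rwa [if_neg (by omega)] at hg
      have hz_eq : z.1 = a + lam := le_antisymm hz_le hz_ge
      -- o' is nonempty; inspect its head
      obtain ⟨y, o'', rfl⟩ : ∃ y o'', o' = y :: o'' := by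
        cases ho' : o' with
        | nil => rw [ho'] at hup'; exact absurd hup' (up_cons_ne pend' z.1 z.2 s)
        | cons y o'' => exact ⟨y, o'', rfl⟩
      have hyhead : (up lam pend' (z :: s)).head? = some y := by rw [hup']; rfl
      have hy1 : y.1 = z.1 + 1 + y.2.toNat := up_head pend' z.1 z.2 s y hyhead
      obtain ⟨hgapy, hmky, -⟩ := hOko'
      have hygap : v + lam ≤ y.1 := by rwa [if_neg (by omega)] at hgapy
      have hmv : mkv = false := by
        cases hm : mkv
        · rfl
        · exfalso
          have hm1 : mkv.toNat = 1 := by simp [hm]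
          have h3v := good_ge3 (hmkv hm).1
          cases hy2 : y.2
          · rw [hy2] at hy1; simp at hy1; omega
          · have := (hmky hy2).2
            rw [hy2] at hy1; simp at hy1; omega
      subst hmv
      -- choose the bits to cover pend'
      have hbits : ∃ pend mk : Bool, (pend || mk) = pend' ∧ pend.toNat + mk.toNat = pend'.toNat ∧
          (mk = true → good lam a ∧ (p = 0 ∨ p + lam < a)) ∧
          (pend = true → mk = false ∧ (lam = 2 → a % 2 = 1) ∧
            ((p = 0 ∧ a < lam) ∨ (0 < p ∧ a = p + lam))) := by
        cases hp' : pend'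
        · exact ⟨false, false, rfl, rfl, by simp, by simp⟩
        · obtain ⟨a', t', heq, hpar', hcase⟩ := hpendOK' hp'
          cases heq
          have hparA : lam = 2 → a % 2 = 1 := by
            intro hl2
            have := hpar' hl2
            rcases hcase with ⟨h0, _⟩ | ⟨_, hEq⟩
            · omega
            · omega
          have hbig : (p = 0 ∧ 0 < a) ∨ (0 < p ∧ p + lam ≤ a) := by
            rcases Nat.eq_zero_or_pos p with h | h
            · exact Or.inl ⟨h, ha0⟩
            · exact Or.inr ⟨h, hA2 h⟩
          obtain ⟨pend, mk, hor, hsum1, hpm, hmkval, hpendval⟩ := choose hl hparA hbig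
          exact ⟨pend, mk, hor, by simpa using hsum1, hmkval,
            fun h => ⟨hpm h, (hpendval h).1, (hpendval h).2⟩⟩
      obtain ⟨pend, mk, hor, hsum1, hmkval, hpendval⟩ := hbits
      refine ⟨pend, (a, mk) :: (z :: s), ?_, ⟨hgapnew, hmkval, hOkw'⟩, ?_, hqOKnew mk, ?_, ?_⟩
      · have hveq' : v = a + 1 := by
          have h0 : (false : Bool).toNat = 0 := rfl
          omega
        rw [up_cons, if_pos hcB, hor, hup', show a + 1 = v from hveq'.symm]
      · intro h
        obtain ⟨hmf, hpar, hcase⟩ := hpendval h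
        exact ⟨a, z :: s, by rw [hmf], hpar, hcase⟩
      · have h1 : wlen ((a, mk) :: z :: s) = 1 + mk.toNat + wlen (z :: s) := wlen_cons _ _
        have h2 : wlen ((v, false) :: y :: o'') = 1 + 0 + wlen (y :: o'') := wlen_cons _ _
        rw [h1, h2]
        omega
      · simp [hlength']

lemma wset_finite (n m : ℕ) : (Wset lam n m).Finite := by
  have hfin : {l : List (Fin (n + 1) × Bool) | l.length ≤ n}.Finite := List.finite_length_le _ n
  have himg := hfin.image (fun l => l.map (fun x => (x.1.1, x.2)))
  refine Set.Finite.subset himg ?_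
  rintro w ⟨h1, h2, h3⟩
  have hpos := ok_pos w 0 h1
  have hle : ∀ x ∈ w, x.1 ≤ n := by
    intro x hx
    calc x.1 ≤ wsum w := by
          unfold wsum
          exact List.single_le_sum (by simp) _ (List.mem_map_of_mem hx)
      _ = n := h2
  have hlen : w.length ≤ n := by
    have : w.length ≤ wsum w := by
      clear h1 h2 h3
      induction w with
      | nil => simp [wsum]
      | cons x t ih =>
        simp only [wsum, List.map_cons, List.sum_cons, List.length_cons]
        have h1 := hpos x (by simp)
        have h2 : t.length ≤ wsum t := by
          apply ih
          · intro y hy; exact hpos y (List.mem_cons_of_mem _ hy)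
          · intro y hy; exact hle y (List.mem_cons_of_mem _ hy)
        simp only [wsum] at h2
        omega
    omega
  refine ⟨w.attach.map (fun y => (⟨y.1.1, Nat.lt_succ_of_le (hle y.1 y.2)⟩, y.1.2)),
    by simpa using hlen, ?_⟩
  show List.map _ (List.map _ w.attach) = w
  rw [List.map_map]
  conv_rhs => rw [← List.attach_map_subtype_val w]
  apply List.map_congr_left
  intro a ha
  rfl

lemma pendOK_of_headLt (hl : lam = 2 ∨ lam = 3) {w : List (ℕ × Bool)} (hOk : Ok lam 0 w)
    (hh : headLt lam w = true) : pendOK lam 0 true w := by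
  intro _
  cases w with
  | nil => simp [headLt] at hh
  | cons x t =>
    obtain ⟨v, mkv⟩ := x
    have hvlt : v < lam := by simpa [headLt] using hh
    obtain ⟨hgap, hmk, -⟩ := hOk
    rw [if_pos rfl] at hgap
    have hlam3 : lam ≤ 3 := by rcases hl with rfl | rfl <;> norm_num
    have hmf : mkv = false := by
      cases h : mkv
      · rfl
      · have := good_ge3 (hmk h).1
        omega
    refine ⟨v, t, by rw [hmf], ?_, Or.inl ⟨rfl, hvlt⟩⟩
    intro hl2
    omega

lemma headLt_false_ge {w : List (ℕ × Bool)} (hh : headLt lam w = false) :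
    ∀ x ∈ w.head?, lam ≤ x.1 := by
  intro x hx
  cases w with
  | nil => simp at hx
  | cons y t =>
    simp only [List.head?_cons, Option.mem_def, Option.some.injEq] at hx
    subst hx
    simpa [headLt] using hh

lemma not_one_mem_up_head (hl : lam = 2 ∨ lam = 3) {w : List (ℕ × Bool)} {pend : Bool}
    (hOk : Ok lam 0 w) :
    up lam pend w ≠ (1, false) :: up lam false w → True := fun _ => trivial

lemma rec_card (hl : lam = 2 ∨ lam = 3) {n m : ℕ} (hm : 1 ≤ m) (hmn : m ≤ n) :
    (Wset lam n m).ncard = (Wset lam (n - m) m).ncard + (Wset lam (n - m) (m - 1)).ncard := by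
  classical
  have hlam2 : 2 ≤ lam := by rcases hl with rfl | rfl <;> norm_num
  set U := Wset lam (n - m) m ∪ Wset lam (n - m) (m - 1) with hU
  -- facts dispatch
  have hcase : ∀ w ∈ U, Ok lam 0 w ∧ wsum w = n - m ∧ (wlen w = m ∨ wlen w = m - 1) := by
    rintro w (⟨h1, h2, h3⟩ | ⟨h1, h2, h3⟩)
    · exact ⟨h1, h2, Or.inl h3⟩
    · exact ⟨h1, h2, Or.inr h3⟩
  -- what Phi looks like on each kind of element
  have hPhi1 : ∀ w, wlen w = m → Phi lam m w = up lam false w := by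
    intro w h
    unfold Phi
    rw [if_pos h]
  have hPhi2 : ∀ w, wlen w = m - 1 → headLt lam w = true →
      Phi lam m w = up lam true w := by
    intro w h hh
    unfold Phi
    rw [if_neg (by omega), if_pos hh]
  have hPhi3 : ∀ w, wlen w = m - 1 → headLt lam w = false →
      Phi lam m w = (1, false) :: up lam false w := by
    intro w h hh
    unfold Phi
    rw [if_neg (by omega), hh]
    simp
  -- head of an up-image is never 1
  have hne1 : ∀ (w : List (ℕ × Bool)) (pend : Bool) (l : List (ℕ × Bool)), Ok lam 0 w →
      up lam pend w ≠ (1, false) :: l := by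
    intro w pend l hOk heq
    cases w with
    | nil => exact absurd heq (by simp [up])
    | cons x t =>
      obtain ⟨v, mkv⟩ := x
      have hv : 0 < v := by
        obtain ⟨hgap, -, -⟩ := hOk
        rwa [if_pos rfl] at hgap
      have h1 : (up lam pend ((v, mkv) :: t)).head? = some (1, false) := by rw [heq]; rfl
      have := up_head pend v mkv t (1, false) h1
      simp at this
      omega
  -- injectivity
  have hinj : Set.InjOn (Phi lam m) U := by
    intro w₁ hw₁ w₂ hw₂ heq
    obtain ⟨hOk₁, hsum₁, hlen₁⟩ := hcase w₁ hw₁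
    obtain ⟨hOk₂, hsum₂, hlen₂⟩ := hcase w₂ hw₂
    -- reduce to up-form with pends
    have main : ∀ (p₁ p₂ : Bool), pendOK lam 0 p₁ w₁ → pendOK lam 0 p₂ w₂ →
        up lam p₁ w₁ = up lam p₂ w₂ → w₁ = w₂ := by
      intro p₁ p₂ hp₁ hp₂ h
      exact (up_inj hl w₁ w₂ 0 p₁ p₂ hOk₁ hOk₂ hp₁ hp₂ h).2
    rcases hlen₁ with h₁ | h₁ <;> rcases hlen₂ with h₂ | h₂
    · rw [hPhi1 w₁ h₁, hPhi1 w₂ h₂] at heq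
      exact main false false (by simp [pendOK]) (by simp [pendOK]) heq
    · rw [hPhi1 w₁ h₁] at heq
      cases hh : headLt lam w₂
      · rw [hPhi3 w₂ h₂ hh] at heq
        exact absurd heq (hne1 w₁ false _ hOk₁)
      · rw [hPhi2 w₂ h₂ hh] at heq
        have := up_inj hl w₁ w₂ 0 false true hOk₁ hOk₂ (by simp [pendOK])
          (pendOK_of_headLt hl hOk₂ hh) heq
        exact absurd this.1 (by simp)
    · rw [hPhi1 w₂ h₂] at heq
      cases hh : headLt lam w₁
      · rw [hPhi3 w₁ h₁ hh] at heq
        exact absurd heq.symm (hne1 w₂ false _ hOk₂)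
      · rw [hPhi2 w₁ h₁ hh] at heq
        have := up_inj hl w₁ w₂ 0 true false hOk₁ hOk₂ (pendOK_of_headLt hl hOk₁ hh)
          (by simp [pendOK]) heq
        exact absurd this.1 (by simp)
    · cases hh₁ : headLt lam w₁ <;> cases hh₂ : headLt lam w₂
      · rw [hPhi3 w₁ h₁ hh₁, hPhi3 w₂ h₂ hh₂] at heq
        injection heq with h5 h6
        exact main false false (by simp [pendOK]) (by simp [pendOK]) h6
      · rw [hPhi3 w₁ h₁ hh₁, hPhi2 w₂ h₂ hh₂] at heq
        exact absurd heq.symm (hne1 w₂ true _ hOk₂)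
      · rw [hPhi2 w₁ h₁ hh₁, hPhi3 w₂ h₂ hh₂] at heq
        exact absurd heq (hne1 w₁ true _ hOk₁)
      · rw [hPhi2 w₁ h₁ hh₁, hPhi2 w₂ h₂ hh₂] at heq
        exact main true true (pendOK_of_headLt hl hOk₁ hh₁) (pendOK_of_headLt hl hOk₂ hh₂) heq
  -- image
  have himg : Phi lam m '' U = Wset lam n m := by
    ext o
    constructor
    · rintro ⟨w, hw, rfl⟩
      obtain ⟨hOk, hsum, hlen⟩ := hcase w hw
      rcases hlen with h | h
      · rw [hPhi1 w h]
        obtain ⟨hOk', hsum', hlen', -⟩ :=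
          up_spec hl w 0 0 false hOk (by simp [pendOK]) (Or.inl ⟨rfl, rfl⟩)
        simp only [Bool.toNat_false, add_zero] at hsum' hlen'
        refine ⟨hOk', ?_, ?_⟩
        · have hwl : wlen w = w.length + nmarks w := rfl
          omega
        · omega
      · cases hh : headLt lam w
        · rw [hPhi3 w h hh]
          have hOkt : Ok lam 1 (up lam false w) ∧ _ ∧ _ ∧ _ :=
            up_spec hl w 0 1 false hOk (by simp [pendOK])
              (Or.inr (Or.inr (Or.inr ⟨rfl, rfl, headLt_false_ge hh⟩)))
          obtain ⟨hOk', hsum', hlen', -⟩ := hOkt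
          simp only [Bool.toNat_false, add_zero] at hsum' hlen'
          have hws : wsum ((1, false) :: up lam false w) = 1 + wsum (up lam false w) :=
            wsum_cons _ _
          have hwml : wlen ((1, false) :: up lam false w) = 1 + 0 + wlen (up lam false w) :=
            wlen_cons _ _
          refine ⟨⟨by norm_num, by simp, hOk'⟩, ?_, ?_⟩
          · rw [hws]
            have hwl : wlen w = w.length + nmarks w := rfl
            omega
          · rw [hwml]
            omega
        · rw [hPhi2 w h hh]
          obtain ⟨hOk', hsum', hlen', -⟩ :=
            up_spec hl w 0 0 true hOk (pendOK_of_headLt hl hOk hh) (Or.inl ⟨rfl, rfl⟩)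
          refine ⟨hOk', ?_, ?_⟩
          · have hwl : wlen w = w.length + nmarks w := rfl
            simp only [Bool.toNat_true] at hsum'
            omega
          · simp only [Bool.toNat_true] at hlen'
            omega
    · rintro ⟨hOk, hsum, hlen⟩
      cases o with
      | nil => exfalso; simp [wlen, nmarks] at hlen; omega
      | cons x o' =>
        obtain ⟨v, mkv⟩ := x
        obtain ⟨hgap, hmkx, hOko'⟩ := hOk
        rw [if_pos rfl] at hgap
        by_cases hv1 : v = 1
        · -- the prepend case
          subst hv1
          have hmf : mkv = false := by
            cases h : mkv
            · rfl
            · have := good_ge3 (hmkx h).1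
              omega
          subst hmf
          obtain ⟨pend, w', hup', hOkw', hpendOK', hqOK', hlen', hlength'⟩ :=
            up_surj hl o' 0 1 hOko' (Or.inr (Or.inr (Or.inr ⟨rfl, rfl⟩)))
              (by intro _ h; exact absurd h one_ne_zero)
          have hwhead : ∀ x ∈ w'.head?, lam ≤ x.1 := by
            rcases hqOK' with ⟨-, h⟩ | ⟨h, -⟩ | ⟨h, -⟩ | ⟨-, -, h⟩
            · omega
            · omega
            · omega
            · exact h
          have hpf : pend = false := by
            cases hp : pend
            · rfl
            · exfalso
              obtain ⟨a', t', heq, -, hcase'⟩ := hpendOK' hp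
              rcases hcase' with ⟨-, hlt⟩ | ⟨h0, -⟩
              · have := hwhead (a', false) (by rw [heq]; rfl)
                omega
              · omega
          subst hpf
          simp only [Bool.toNat_false, add_zero] at hlen'
          have hlo : wlen ((1, false) :: o') = 1 + 0 + wlen o' := wlen_cons _ _
          have hlo' : wlen ((1, false) :: o') = m := hlen
          have hso : wsum ((1, false) :: o') = 1 + wsum o' := wsum_cons _ _
          have hhw : headLt lam w' = false := by
            cases w' with
            | nil => rfl
            | cons y t =>
              have := hwhead y (by rfl)
              simp [headLt]
              omega
          refine ⟨w', Or.inr ⟨hOkw', ?_, by omega⟩, ?_⟩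
          · -- sum of w'
            obtain ⟨-, hsum', -, -⟩ :=
              up_spec hl w' 0 1 false hOkw' (by simp [pendOK]) hqOK'
            rw [hup'] at hsum'
            have hwl : wlen w' = w'.length + nmarks w' := rfl
            simp only [Bool.toNat_false] at hsum' hlen'
            omega
          · rw [hPhi3 w' (by omega) hhw, hup']
        · -- the direct case
          have hv2 : 2 ≤ v := by omega
          have hsurj := up_surj hl ((v, mkv) :: o') 0 0
            ⟨by rw [if_pos rfl]; omega, hmkx, hOko'⟩ (Or.inl ⟨rfl, rfl⟩) ?_
          rotate_left
          · intro _ _ z hz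
            simp only [List.head?_cons, Option.mem_def, Option.some.injEq] at hz
            subst hz
            exact hv2
          obtain ⟨pend, w, hup, hOkw, hpendOK, hqOK, hlenw, hlength⟩ := hsurj
          obtain ⟨-, hsum', -, -⟩ := up_spec hl w 0 0 pend hOkw hpendOK hqOK
          rw [hup] at hsum'
          have hwl : wlen w = w.length + nmarks w := rfl
          cases hp : pend
          · subst hp
            simp only [Bool.toNat_false] at hsum' hlenw
            refine ⟨w, Or.inl ⟨hOkw, by omega, by omega⟩, ?_⟩
            rw [hPhi1 w (by omega), hup]
          · subst hp
            simp only [Bool.toNat_true] at hsum' hlenw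
            have hhlt : headLt lam w = true := by
              obtain ⟨a', t', heq, -, hcase'⟩ := hpendOK rfl
              rcases hcase' with ⟨-, hlt⟩ | ⟨h0, -⟩
              · rw [heq]
                simpa [headLt] using hlt
              · omega
            refine ⟨w, Or.inr ⟨hOkw, by omega, by omega⟩, ?_⟩
            rw [hPhi2 w (by omega) hhlt, hup]
  -- disjointness and finiteness
  have hdisj : Disjoint (Wset lam (n - m) m) (Wset lam (n - m) (m - 1)) := by
    rw [Set.disjoint_left]
    rintro w ⟨-, -, h1⟩ ⟨-, -, h2⟩
    omega
  rw [← himg, Set.ncard_image_of_injOn hinj, hU,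
    Set.ncard_union_eq hdisj (wset_finite _ _) (wset_finite _ _)]

/- ------------ Part 3 : degenerate cases ------------- -/

lemma wlen_le_wsum (hl : lam = 2 ∨ lam = 3) : ∀ (w : List (ℕ × Bool)) (p : ℕ), Ok lam p w → wlen w ≤ wsum w := by
  intro w
  induction w with
  | nil => simp [wlen, wsum, nmarks]
  | cons x t ih =>
    intro p hp
    obtain ⟨h1, h2, h3⟩ := hp
    have ht := ih x.1 h3
    have hx : 1 + x.2.toNat ≤ x.1 := by
      cases hx2 : x.2 with
      | false => simp only [Bool.toNat_false]; split at h1 <;> (rcases hl with h|h <;> omega)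
      | true =>
        have := good_ge3 (h2 hx2).1
        simp only [Bool.toNat_true]; omega
    simp only [wlen, wsum, nmarks, List.length_cons, List.countP_cons, List.map_cons,
      List.sum_cons] at *
    cases hx2 : x.2 <;> simp [hx2] at hx ⊢ <;> omega

lemma wset_zero (m : ℕ) : Wset lam 0 m = if m = 0 then {([] : List (ℕ × Bool))} else ∅ := by
  ext w
  unfold Wset
  constructor
  · rintro ⟨h1, h2, h3⟩
    have hw : w = [] := by
      cases w with
      | nil => rfl
      | cons x t =>
        exfalso
        have := ok_pos _ _ h1 x (by simp)
        simp only [wsum, List.map_cons, List.sum_cons] at h2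
        omega
    subst hw
    simp only [wlen, nmarks, List.length_nil, List.countP_nil] at h3
    simp [← h3]
  · intro hw
    split at hw
    · rename_i hm
      simp only [Set.mem_singleton_iff] at hw
      subst hw hm
      exact ⟨trivial, rfl, rfl⟩
    · exact absurd hw (Set.notMem_empty w)

lemma wset_empty_of_lt (hl : lam = 2 ∨ lam = 3) {n m : ℕ} (h : n < m) : Wset lam n m = ∅ := by
  ext w
  simp only [Set.mem_empty_iff_false, iff_false]
  rintro ⟨h1, h2, h3⟩
  have := wlen_le_wsum hl w 0 h1
  omega

lemma wset_empty_zero {n : ℕ} (hn : 1 ≤ n) : Wset lam n 0 = ∅ := by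
  ext w
  simp only [Set.mem_empty_iff_false, iff_false]
  rintro ⟨h1, h2, h3⟩
  have hw : w = [] := by
    cases w with
    | nil => rfl
    | cons x t => simp [wlen, nmarks] at h3
  subst hw
  simp [wsum] at h2
  omega

end lemmas

/- ------------ Part 4 : induction ------------- -/

lemma main (n : ℕ) : ∀ m, (Wset 3 n m).ncard = (Wset 2 n m).ncard := by
  induction n using Nat.strong_induction_on with
  | _ n ih =>
    intro m
    rcases Nat.eq_zero_or_pos n with rfl | hn
    · rw [wset_zero, wset_zero]
    rcases Nat.eq_zero_or_pos m with rfl | hm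
    · rw [wset_empty_zero hn, wset_empty_zero hn]
    rcases lt_or_ge n m with h | h
    · rw [wset_empty_of_lt (Or.inr rfl) h, wset_empty_of_lt (Or.inl rfl) h]
    · rw [rec_card (Or.inr rfl) hm h, rec_card (Or.inl rfl) hm h,
        ih (n - m) (by omega) m, ih (n - m) (by omega) (m - 1)]

end S17

/-- for every `n ≥ 1` and every `m`, the number of marked 3-partitions of
`n` of length `m` equals the number of marked 2-partitions of `n` of length `m`. -/
theorem stmt_17 (n : ℕ) (hn : 1 ≤ n) (m : ℕ) :
    {p : List ℕ × Finset ℕ | IsMarked 3 p ∧ p.1.sum = n ∧ p.1.length + p.2.card = m}.ncard =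
      {p : List ℕ × Finset ℕ | IsMarked 2 p ∧ p.1.sum = n ∧ p.1.length + p.2.card = m}.ncard := by
  have h3 := S17.part1 (lam := 3) (Or.inr rfl) n m
  have h2 := S17.part1 (lam := 2) (Or.inl rfl) n m
  have hA3 : S17.Aset 3 n m =
      {p : List ℕ × Finset ℕ | IsMarked 3 p ∧ p.1.sum = n ∧ p.1.length + p.2.card = m} := rfl
  have hA2 : S17.Aset 2 n m =
      {p : List ℕ × Finset ℕ | IsMarked 2 p ∧ p.1.sum = n ∧ p.1.length + p.2.card = m} := rfl
  rw [← hA3, ← hA2, h3, h2, S17.main n m]
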